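/- (PVH Criterion) In the PVH setup, if the maps κ_p^Syz: ker(δ_K|_{R_{≥p}}) → ker(δ_A|_{R_p}) are surjective for all p ≥ 2, then the associated graded algebra gr K = ⊕_{p≥0} I_K^p/I_K^{p+1} is quadratic, i.e., the canonical graded surjection A → gr K from the quadratic approximation A is an isomorphism. -/

import Mathlib

/-- The free algebra `F` on a set `X` of generators. -/
abbrev FreeAlg (X : Type*) := FreeAlgebra ℚ X

/-- The augmentation of the free algebra, sending each generator to `1`. -/
noncomputable def aug (X : Type*) : FreeAlg X →ₐ[ℚ] ℚ :=
  FreeAlgebra.lift ℚ (fun _ : X => (1 : ℚ))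

/-- The augmentation ideal `I_F` of the free algebra, as a `ℚ`-submodule. -/
noncomputable def augIdeal (X : Type*) : Submodule ℚ (FreeAlg X) :=
  LinearMap.ker (aug X).toLinearMap

/-- `I_F^p / I_F^{p+1}`, the degree-`p` graded piece `X̃^p` of the free algebra. -/
noncomputable abbrev grF (X : Type*) (p : ℕ) :=
  ↥(augIdeal X ^ p) ⧸
    Submodule.comap (augIdeal X ^ p).subtype (augIdeal X ^ (p + 1))

/-- (PVH Criterion.)  In the PVH setup — `K = F/M` with `F` the free algebra on
`X`, `M ⊆ I_F²` the two-sided ideal of relations, `R p` the filtration piece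
`R_{≥p}` of the free bimodule of relation symbols with graded piece `Rdeg p`,
`δK` the evaluation map and `δA` its homogeneous truncation — if the induced maps
`κ_p^Syz : ker (δK|R_{≥p}) → ker (δA|R_p)` are surjective for all `p ≥ 2`, then
`gr K` is quadratic: the canonical graded surjection `A → gr K` from the quadratic
approximation is an isomorphism.  Concretely, in each degree `p`,
`A^p = I_F^p/(I_F^{p+1} + δK(R_{≥p}))` maps isomorphically onto
`I_K^p/I_K^{p+1} = I_F^p/(I_F^{p+1} + (M ∩ I_F^p))`, i.e. the two denominators
agree. -/
theorem pvh_criterion_quadraticity {X : Type*}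
    (R : ℕ → Type*) [∀ p, AddCommGroup (R p)] [∀ p, Module ℚ (R p)]
    (Rdeg : ℕ → Type*) [∀ p, AddCommGroup (Rdeg p)] [∀ p, Module ℚ (Rdeg p)]
    (ι : ∀ p, R (p + 1) →ₗ[ℚ] R p)
    (π₁ : ∀ p, R p →ₗ[ℚ] Rdeg p)
    (δK : ∀ p, R p →ₗ[ℚ] FreeAlg X)
    (hδ : ∀ p r, δK p r ∈ augIdeal X ^ p)
    (δA : ∀ p, Rdeg p →ₗ[ℚ] grF X p)
    -- exactness of the rows `0 → R_{≥p+1} → R_{≥p} → R_p → 0`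
    (hι : ∀ p, Function.Injective (ι p))
    (hπ₁ : ∀ p, Function.Surjective (π₁ p))
    (hexact : ∀ p, LinearMap.ker (π₁ p) = LinearMap.range (ι p))
    -- `δK` is compatible with the filtration maps
    (hcomp : ∀ p, (δK p).comp (ι p) = δK (p + 1))
    -- `δA` is the homogeneous truncation of `δK`
    (hδA : ∀ p (r : R p),
      δA p (π₁ p r) = Submodule.Quotient.mk ⟨δK p r, hδ p r⟩)
    -- `M` is the two-sided ideal of relations, generated in degrees ≥ 2
    (M : Submodule ℚ (FreeAlg X))
    (hM : M = LinearMap.range (δK 2))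
    (hM2 : M ≤ augIdeal X * augIdeal X)
    (hMideal : ∀ f g : FreeAlg X, ∀ m ∈ M, f * m * g ∈ M)
    -- the PVH criterion: all the maps `κ_p^Syz` are surjective
    (hκ : ∀ p, 2 ≤ p → ∀ y : Rdeg p, δA p y = 0 →
        ∃ r : R p, δK p r = 0 ∧ π₁ p r = y) :
    -- conclusion: `gr K` is quadratic
    ∀ p, 2 ≤ p →
      augIdeal X ^ (p + 1) ⊔ LinearMap.range (δK p) =
        augIdeal X ^ (p + 1) ⊔ (M ⊓ augIdeal X ^ p) := by
  -- `I * I ≤ I`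
  have hII : augIdeal X * augIdeal X ≤ augIdeal X := by
    rw [Submodule.mul_le]
    intro x hx y hy
    simp only [augIdeal, LinearMap.mem_ker, AlgHom.toLinearMap_apply] at *
    rw [map_mul, hx, hy, mul_zero]
  -- `I^(n+1) ≤ I^n` for `n ≥ 1`
  have hstep : ∀ n : ℕ, 1 ≤ n → augIdeal X ^ (n + 1) ≤ augIdeal X ^ n := by
    intro n hn
    induction n with
    | zero => omega
    | succ m ih =>
      rcases Nat.eq_zero_or_pos m with hm | hm
      · subst hm
        show augIdeal X ^ 2 ≤ augIdeal X ^ 1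
        rw [pow_one, sq]
        exact hII
      · calc augIdeal X ^ (m + 2) = augIdeal X ^ (m + 1) * augIdeal X := pow_succ _ _
          _ ≤ augIdeal X ^ m * augIdeal X := mul_le_mul' (ih hm) le_rfl
          _ = augIdeal X ^ (m + 1) := (pow_succ _ _).symm
  -- antitonicity of powers in the range `≥ 1`
  have hpow : ∀ a b : ℕ, 1 ≤ b → b ≤ a → augIdeal X ^ a ≤ augIdeal X ^ b := by
    intro a b hb hba
    induction a with
    | zero => omega
    | succ n ih =>
      rcases Nat.lt_or_ge b (n + 1) with h | h
      · exact le_trans (hstep n (by omega)) (ih (by omega))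
      · have : b = n + 1 := by omega
        subst this; exact le_rfl
  -- ranges of `δK` are decreasing
  have hrange : ∀ q : ℕ, LinearMap.range (δK (q + 1)) ≤ LinearMap.range (δK q) := by
    intro q x hx
    obtain ⟨r, hr⟩ := hx
    exact ⟨ι q r, by rw [← hr, ← hcomp q]; rfl⟩
  have hrange2 : ∀ q : ℕ, 2 ≤ q → LinearMap.range (δK q) ≤ LinearMap.range (δK 2) := by
    intro q hq
    induction q, hq using Nat.le_induction with
    | base => exact le_rfl
    | succ q hq ih => exact le_trans (hrange q) ih
  intro p hp
  apply le_antisymm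
  · refine sup_le le_sup_left (le_trans ?_ le_sup_right)
    refine le_inf ?_ ?_
    · rw [hM]; exact hrange2 p hp
    · rintro x ⟨r, rfl⟩; exact hδ p r
  · refine sup_le le_sup_left ?_
    rintro m ⟨hmM, hmp⟩
    have key : ∀ q, 2 ≤ q → q ≤ p → ∃ r : R q, δK q r = m := by
      intro q hq
      induction q, hq using Nat.le_induction with
      | base =>
        intro _
        rw [hM] at hmM
        exact hmM
      | succ q hq ih =>
        intro hqp
        obtain ⟨r, hr⟩ := ih (by omega)
        -- `δA q (π₁ q r) = 0` since `m ∈ I^p ≤ I^(q+1)`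
        have hzero : δA q (π₁ q r) = 0 := by
          rw [hδA q r, Submodule.Quotient.mk_eq_zero]
          show δK q r ∈ augIdeal X ^ (q + 1)
          rw [hr]
          exact hpow p (q + 1) (by omega) hqp hmp
        obtain ⟨s, hs0, hsπ⟩ := hκ q hq (π₁ q r) hzero
        have hker : r - s ∈ LinearMap.ker (π₁ q) := by
          rw [LinearMap.mem_ker, map_sub, hsπ, sub_self]
        rw [hexact q] at hker
        obtain ⟨t, ht⟩ := hker
        refine ⟨t, ?_⟩
        have : δK (q + 1) t = δK q (ι q t) := by rw [← hcomp q]; rfl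
        rw [this, ht, map_sub, hr, hs0, sub_zero]
    obtain ⟨r, hr⟩ := key p hp le_rfl
    exact Submodule.mem_sup_right ⟨r, hr⟩
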